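/- Let G be a symmetric directed graph on [n] and f the conjunctive network on G. Let ω be any (n,2)-universal word. Then the word W := 1, 2, …, n, ω fixes f; consequently λ_CS(n) ≤ λ_2(n) + n. -/

import Mathlib

/-- One asynchronous update step: replace coordinate `i` of `x` by `f x i`. -/
def updateStep {n : ℕ} (f : (Fin n → Bool) → (Fin n → Bool)) (x : Fin n → Bool)
    (i : Fin n) : Fin n → Bool :=
  Function.update x i (f x i)

/-- Action of a word on a state. -/
def applyWord {n : ℕ} (f : (Fin n → Bool) → (Fin n → Bool)) :
    List (Fin n) → (Fin n → Bool) → (Fin n → Bool)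
  | [], x => x
  | i :: w, x => applyWord f w (updateStep f x i)

/-- A word `w` fixes `f` if applying it to any state yields a fixed point of `f`. -/
def Fixes {n : ℕ} (f : (Fin n → Bool) → (Fin n → Bool)) (w : List (Fin n)) : Prop :=
  ∀ x, f (applyWord f w x) = applyWord f w x

/-- The digraph `E` is symmetric: arcs between distinct vertices come in pairs. -/
def SymDigraph {n : ℕ} (E : Fin n → Fin n → Bool) : Prop :=
  ∀ i j : Fin n, i ≠ j → E i j = E j i

/-- The conjunctive network on the digraph `E`: `f_i(x)` is the conjunction of `x_j`
over the in-neighbors `j` of `i` (`1` if `i` has no in-neighbor). -/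
def conjNet {n : ℕ} (E : Fin n → Fin n → Bool) (x : Fin n → Bool) (i : Fin n) : Bool :=
  decide (∀ j : Fin n, E j i = true → x j = true)

/-- A word over alphabet `[n]` is `(n,k)`-universal if it contains as subwords all
words of length `n - k` without repeated letters. -/
def NKUniversal (n k : ℕ) (W : List (Fin n)) : Prop :=
  ∀ u : List (Fin n), u.Nodup → u.length = n - k → u.Sublist W

/-- `λ_k(n)`: the minimum length of an `(n,k)`-universal word. -/
noncomputable def lamK (n k : ℕ) : ℕ :=
  sInf {l : ℕ | ∃ W : List (Fin n), W.length = l ∧ NKUniversal n k W}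

/-- `λ_CS(n)`: the fixing length of the family of conjunctive networks on symmetric
digraphs on `n` vertices. -/
noncomputable def lamCS (n : ℕ) : ℕ :=
  sInf {l : ℕ | ∃ W : List (Fin n), W.length = l ∧
    ∀ E : Fin n → Fin n → Bool, SymDigraph E → Fixes (conjNet E) W}

namespace SCUB

variable {n : ℕ}

lemma applyWord_append (f : (Fin n → Bool) → (Fin n → Bool)) (l₁ l₂ : List (Fin n))
    (x : Fin n → Bool) :
    applyWord f (l₁ ++ l₂) x = applyWord f l₂ (applyWord f l₁ x) := by
  induction l₁ generalizing x with
  | nil => rfl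
  | cons a l ih => simp [applyWord, ih]

lemma conj_false {E : Fin n → Fin n → Bool} {x : Fin n → Bool} {i : Fin n} :
    conjNet E x i = false ↔ ∃ j, E j i = true ∧ x j = false := by
  simp [conjNet]

lemma conj_true {E : Fin n → Fin n → Bool} {x : Fin n → Bool} {i : Fin n} :
    conjNet E x i = true ↔ ∀ j, E j i = true → x j = true := by
  simp [conjNet]

/-- Every zero has a zero in-neighbour (possibly itself via a loop). -/
def Good (E : Fin n → Fin n → Bool) (x : Fin n → Bool) : Prop :=
  ∀ i, x i = false → ∃ j, E j i = true ∧ x j = false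

lemma good_preserved {E : Fin n → Fin n → Bool} (hE : SymDigraph E)
    {c : Fin n → Bool} (hG : Good E c) (v : Fin n) :
    Good E (updateStep (conjNet E) c v) := by
  intro i hi
  by_cases hiv : i = v
  · subst hiv
    have hfi : conjNet E c i = false := by
      simpa [updateStep, Function.update_self] using hi
    obtain ⟨j, hji, hjf⟩ := conj_false.1 hfi
    by_cases hjv : j = i
    · subst hjv
      exact ⟨j, hji, by simpa [updateStep, Function.update_self] using hfi⟩
    · exact ⟨j, hji, by simpa [updateStep, Function.update_of_ne hjv] using hjf⟩
  · have hci : c i = false := by simpa [updateStep, Function.update_of_ne hiv] using hi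
    obtain ⟨j, hji, hjf⟩ := hG i hci
    by_cases hjv : j = v
    · subst hjv
      refine ⟨j, hji, ?_⟩
      have hiv' : i ≠ j := fun h => hiv (h ▸ rfl)
      have hEiv : E i j = true := by rw [hE i j hiv']; exact hji
      have : conjNet E c j = false := conj_false.2 ⟨i, hEiv, hci⟩
      simpa [updateStep, Function.update_self] using this
    · exact ⟨j, hji, by simpa [updateStep, Function.update_of_ne hjv] using hjf⟩

lemma zeros_persist {E : Fin n → Fin n → Bool}
    {c : Fin n → Bool} (hG : Good E c) (v : Fin n) {i : Fin n} (hi : c i = false) :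
    updateStep (conjNet E) c v i = false := by
  by_cases hvi : i = v
  · subst hvi
    obtain ⟨j, hji, hjf⟩ := hG i hi
    have : conjNet E c i = false := conj_false.2 ⟨j, hji, hjf⟩
    simpa [updateStep, Function.update_self] using this
  · simpa [updateStep, Function.update_of_ne hvi] using hi

end SCUB

namespace SCUB

variable {n : ℕ}

def chainCond (E : Fin n → Fin n → Bool) : Finset (Fin n) → List (Fin n) → Prop
  | _, [] => True
  | B, v :: l => (∃ j ∈ B, E j v = true) ∧ chainCond E (insert v B) l

noncomputable def build (E : Fin n → Fin n → Bool) : ℕ → Finset (Fin n) → List (Fin n)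
  | 0, _ => []
  | k+1, B =>
    if h : ∃ v, v ∉ B ∧ ∃ j ∈ B, E j v = true then
      h.choose :: build E k (insert h.choose B)
    else []

lemma build_chain (E : Fin n → Fin n → Bool) :
    ∀ (k : ℕ) (B : Finset (Fin n)), chainCond E B (build E k B) := by
  intro k
  induction k with
  | zero => intro B; trivial
  | succ k ih =>
    intro B
    by_cases h : ∃ v, v ∉ B ∧ ∃ j ∈ B, E j v = true
    · rw [build, dif_pos h]
      exact ⟨h.choose_spec.2, ih _⟩
    · rw [build, dif_neg h]; trivial

lemma build_notmem (E : Fin n → Fin n → Bool) :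
    ∀ (k : ℕ) (B : Finset (Fin n)), ∀ v ∈ build E k B, v ∉ B := by
  intro k
  induction k with
  | zero => intro B v hv; simp [build] at hv
  | succ k ih =>
    intro B v hv
    by_cases h : ∃ v, v ∉ B ∧ ∃ j ∈ B, E j v = true
    · rw [build, dif_pos h] at hv
      rcases List.mem_cons.1 hv with h1 | h1
      · exact h1 ▸ h.choose_spec.1
      · exact fun hvB => ih _ v h1 (Finset.mem_insert_of_mem hvB)
    · rw [build, dif_neg h] at hv; simp at hv

lemma build_nodup (E : Fin n → Fin n → Bool) :
    ∀ (k : ℕ) (B : Finset (Fin n)), (build E k B).Nodup := by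
  intro k
  induction k with
  | zero => intro B; simp [build]
  | succ k ih =>
    intro B
    by_cases h : ∃ v, v ∉ B ∧ ∃ j ∈ B, E j v = true
    · rw [build, dif_pos h]
      refine List.nodup_cons.2 ⟨fun hmem => ?_, ih _⟩
      exact build_notmem E k _ _ hmem (Finset.mem_insert_self _ _)
    · rw [build, dif_neg h]; simp

lemma card_sdiff_insert {B : Finset (Fin n)} {v : Fin n} (hv : v ∉ B) :
    (Finset.univ \ insert v B).card + 1 = (Finset.univ \ B).card := by
  have h1 : Finset.univ \ insert v B = (Finset.univ \ B).erase v := by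
    ext a; simp [Finset.mem_sdiff, Finset.mem_erase, Finset.mem_insert]
  have hvmem : v ∈ Finset.univ \ B := by simp [hv]
  rw [h1, Finset.card_erase_of_mem hvmem]
  have : 0 < (Finset.univ \ B).card := Finset.card_pos.2 ⟨v, hvmem⟩
  omega

lemma build_length (E : Fin n → Fin n → Bool) :
    ∀ (k : ℕ) (B : Finset (Fin n)), (build E k B).length ≤ (Finset.univ \ B).card := by
  intro k
  induction k with
  | zero => intro B; simp [build]
  | succ k ih =>
    intro B
    by_cases h : ∃ v, v ∉ B ∧ ∃ j ∈ B, E j v = true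
    · rw [build, dif_pos h]
      have := ih (insert h.choose B)
      have hc := card_sdiff_insert (B := B) h.choose_spec.1
      simp only [List.length_cons]
      omega
    · rw [build, dif_neg h]; simp

lemma build_closed (E : Fin n → Fin n → Bool) :
    ∀ (k : ℕ) (B : Finset (Fin n)), (Finset.univ \ B).card ≤ k →
      ∀ j, (j ∈ B ∨ j ∈ build E k B) → ∀ i, ¬ (i ∈ B ∨ i ∈ build E k B) →
        E j i = false := by
  intro k
  induction k with
  | zero =>
    intro B hB j hj i hi
    exfalso
    have : Finset.univ \ B = ∅ := Finset.card_eq_zero.1 (Nat.le_zero.1 hB)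
    have : i ∈ B := by
      by_contra hiB
      have : i ∈ Finset.univ \ B := by simp [hiB]
      simp [‹Finset.univ \ B = ∅›] at this
    exact hi (Or.inl this)
  | succ k ih =>
    intro B hB j hj i hi
    by_cases h : ∃ v, v ∉ B ∧ ∃ j ∈ B, E j v = true
    · rw [build, dif_pos h] at hj hi
      have hc := card_sdiff_insert (B := B) h.choose_spec.1
      refine ih (insert h.choose B) (by omega) j ?_ i ?_
      · rcases hj with hj | hj
        · exact Or.inl (Finset.mem_insert_of_mem hj)
        · rcases List.mem_cons.1 hj with h1 | h1
          · exact Or.inl (h1 ▸ Finset.mem_insert_self _ _)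
          · exact Or.inr h1
      · intro hcon
        apply hi
        rcases hcon with hc1 | hc1
        · rcases Finset.mem_insert.1 hc1 with h1 | h1
          · exact Or.inr (h1 ▸ List.mem_cons_self)
          · exact Or.inl h1
        · exact Or.inr (List.mem_cons_of_mem _ hc1)
    · rw [build, dif_neg h] at hj hi
      simp only [List.not_mem_nil, or_false] at hj hi
      by_contra hne
      have hEji : E j i = true := by
        cases hEv : E j i
        · exact absurd hEv hne
        · rfl
      exact h ⟨i, hi, j, hj, hEji⟩

end SCUB

namespace SCUB

variable {n : ℕ}

lemma run_lemma {E : Fin n → Fin n → Bool} (hE : SymDigraph E) :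
    ∀ {l w : List (Fin n)}, l.Sublist w → ∀ (B : Finset (Fin n)) (c : Fin n → Bool),
      chainCond E B l → Good E c → (∀ i ∈ B, c i = false) →
      ∀ i, (i ∈ B ∨ i ∈ l) → applyWord (conjNet E) w c i = false := by
  intro l w h
  induction h with
  | slnil =>
    intro B c _ _ hB i hi
    simp only [List.not_mem_nil, or_false] at hi
    exact hB i hi
  | cons a h ih =>
    intro B c hch hG hB i hi
    show applyWord (conjNet E) _ (updateStep (conjNet E) c a) i = false
    exact ih B _ hch (good_preserved hE hG a)
      (fun j hj => zeros_persist hG a (hB j hj)) i hi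
  | cons_cons a h ih =>
    intro B c hch hG hB i hi
    obtain ⟨⟨j, hjB, hja⟩, hch'⟩ := hch
    have hfa : conjNet E c a = false := conj_false.2 ⟨j, hja, hB j hjB⟩
    show applyWord (conjNet E) _ (updateStep (conjNet E) c a) i = false
    refine ih (insert a B) _ hch' (good_preserved hE hG a) ?_ i ?_
    · intro m hm
      rcases Finset.mem_insert.1 hm with h1 | h1
      · subst h1; simp [updateStep, Function.update_self, hfa]
      · exact zeros_persist hG a (hB m h1)
    · rcases hi with h1 | h1
      · exact Or.inl (Finset.mem_insert_of_mem h1)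
      · rcases List.mem_cons.1 h1 with h2 | h2
        · exact Or.inl (h2 ▸ Finset.mem_insert_self _ _)
        · exact Or.inr h2

lemma inv_run {E : Fin n → Fin n → Bool} (hE : SymDigraph E) (T : Fin n → Prop)
    (hcl : ∀ j, T j → ∀ i, ¬ T i → E j i = false) :
    ∀ (w : List (Fin n)) (c : Fin n → Bool), Good E c → (∀ i, c i = false → T i) →
      Good E (applyWord (conjNet E) w c) ∧
        (∀ i, applyWord (conjNet E) w c i = false → T i) := by
  intro w
  induction w with
  | nil => intro c hG hT; exact ⟨hG, hT⟩
  | cons a w ih =>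
    intro c hG hT
    refine ih (updateStep (conjNet E) c a) (good_preserved hE hG a) ?_
    intro i hi
    by_cases hia : i = a
    · subst hia
      have hfa : conjNet E c i = false := by
        simpa [updateStep, Function.update_self] using hi
      obtain ⟨j, hji, hjf⟩ := conj_false.1 hfa
      by_contra hTi
      have := hcl j (hT j hjf) i hTi
      rw [this] at hji; exact absurd hji (by simp)
    · exact hT i (by simpa [updateStep, Function.update_of_ne hia] using hi)

end SCUB

namespace SCUB

variable {n : ℕ}

def PInv (E : Fin n → Fin n → Bool) (x₀ x : Fin n → Bool) (S : Finset (Fin n)) : Prop :=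
  (∀ j, j ∉ S → x j = x₀ j) ∧
  (∀ k ∈ S, x k = true → ∀ j, j ∉ S → E j k = true → x j = true) ∧
  (∀ i ∈ S, x i = false →
    (∃ j, j ≠ i ∧ E j i = true ∧ (x j = false ∨ j ∉ S)) ∨ (∀ j, j ≠ i → E j i = false)) ∧
  (∀ i ∈ S, x i = false → ∃ j, E j i = true)

lemma prefix_step {E : Fin n → Fin n → Bool} (hE : SymDigraph E)
    {x₀ x : Fin n → Bool} {S : Finset (Fin n)} {v : Fin n} (hv : v ∉ S)
    (h : PInv E x₀ x S) :
    PInv E x₀ (updateStep (conjNet E) x v) (insert v S) := by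
  obtain ⟨h1, h2, h3, h4⟩ := h
  have hx' : ∀ j, j ≠ v → updateStep (conjNet E) x v j = x j := fun j hj =>
    Function.update_of_ne hj _ _
  have hxv : updateStep (conjNet E) x v v = conjNet E x v := Function.update_self _ _ _
  refine ⟨?_, ?_, ?_, ?_⟩
  · intro j hj
    have hjv : j ≠ v := fun h => hj (h ▸ Finset.mem_insert_self _ _)
    have hjS : j ∉ S := fun h => hj (Finset.mem_insert_of_mem h)
    rw [hx' j hjv]; exact h1 j hjS
  · intro k hk hxk j hj hEjk
    have hjv : j ≠ v := fun h => hj (h ▸ Finset.mem_insert_self _ _)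
    have hjS : j ∉ S := fun h => hj (Finset.mem_insert_of_mem h)
    rw [hx' j hjv]
    rcases Finset.mem_insert.1 hk with hkv | hkS
    · subst hkv
      rw [hxv] at hxk
      exact conj_true.1 hxk j hEjk
    · have hkv : k ≠ v := fun h => hv (h ▸ hkS)
      rw [hx' k hkv] at hxk
      exact h2 k hkS hxk j hjS hEjk
  · intro i hi hxi
    rcases Finset.mem_insert.1 hi with hiv | hiS
    · -- i = v
      subst hiv
      rw [hxv] at hxi
      obtain ⟨k, hEkv, hxk⟩ := conj_false.1 hxi
      by_cases hex : ∃ k, k ≠ i ∧ E k i = true ∧ x k = false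
      · obtain ⟨k, hki, hEki, hxk'⟩ := hex
        exact Or.inl ⟨k, hki, hEki, Or.inl (by rw [hx' k hki]; exact hxk')⟩
      · have hkv : k = i := by
          by_contra hne
          exact hex ⟨k, hne, hEkv, hxk⟩
        subst hkv
        by_cases hiso : ∀ j, j ≠ k → E j k = false
        · exact Or.inr hiso
        · push_neg at hiso
          obtain ⟨j, hjk, hEjk⟩ := hiso
          have hEjk' : E j k = true := by
            cases hb : E j k
            · exact absurd hb hEjk
            · rfl
          have hxj : x j = true := by
            cases hb : x j
            · exact absurd ⟨j, hjk, hEjk', hb⟩ hex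
            · rfl
          have hjS : j ∉ S := by
            intro hjS
            have hEkj : E k j = true := by
              rw [hE k j (Ne.symm hjk)]; exact hEjk'
            have := h2 j hjS hxj k hv hEkj
            rw [this] at hxk; exact absurd hxk (by simp)
          exact Or.inl ⟨j, hjk, hEjk',
            Or.inr (fun hmem => by
              rcases Finset.mem_insert.1 hmem with h' | h'
              · exact hjk h'
              · exact hjS h')⟩
    · -- i ∈ S
      have hiv : i ≠ v := fun h => hv (h ▸ hiS)
      rw [hx' i hiv] at hxi
      rcases h3 i hiS hxi with ⟨j, hji, hEji, hOr⟩ | hiso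
      · by_cases hjv : j = v
        · subst hjv
          refine Or.inl ⟨j, hji, hEji, Or.inl ?_⟩
          rw [hxv]
          have hEij : E i j = true := by
            rw [hE i j (fun h => hji (h ▸ rfl))]; exact hEji
          exact conj_false.2 ⟨i, hEij, hxi⟩
        · rcases hOr with hxj | hjS
          · exact Or.inl ⟨j, hji, hEji, Or.inl (by rw [hx' j hjv]; exact hxj)⟩
          · exact Or.inl ⟨j, hji, hEji,
              Or.inr (fun hmem => by
                rcases Finset.mem_insert.1 hmem with h' | h'
                · exact hjv h'
                · exact hjS h')⟩
      · exact Or.inr hiso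
  · intro i hi hxi
    rcases Finset.mem_insert.1 hi with hiv | hiS
    · subst hiv
      rw [hxv] at hxi
      obtain ⟨k, hEkv, _⟩ := conj_false.1 hxi
      exact ⟨k, hEkv⟩
    · have hiv : i ≠ v := fun h => hv (h ▸ hiS)
      rw [hx' i hiv] at hxi
      exact h4 i hiS hxi

lemma prefix_run {E : Fin n → Fin n → Bool} (hE : SymDigraph E) {x₀ : Fin n → Bool} :
    ∀ (l : List (Fin n)) (x : Fin n → Bool) (S : Finset (Fin n)), l.Nodup →
      (∀ a ∈ l, a ∉ S) → PInv E x₀ x S →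
      PInv E x₀ (applyWord (conjNet E) l x) (S ∪ l.toFinset) := by
  intro l
  induction l with
  | nil => intro x S _ _ h; simpa [applyWord] using h
  | cons a l ih =>
    intro x S hnd hout h
    have hstep := prefix_step hE (hout a List.mem_cons_self) h
    have hih := ih (updateStep (conjNet E) x a) (insert a S) (List.nodup_cons.1 hnd).2
      (fun b hb => by
        intro hmem
        rcases Finset.mem_insert.1 hmem with h' | h'
        · exact (List.nodup_cons.1 hnd).1 (h' ▸ hb)
        · exact hout b (List.mem_cons_of_mem _ hb) h') hstep
    have hset : insert a S ∪ l.toFinset = S ∪ (a :: l).toFinset := by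
      ext b; simp [Finset.mem_insert, Finset.mem_union, List.mem_toFinset]
    show PInv E x₀ (applyWord (conjNet E) l (updateStep (conjNet E) x a)) _
    rw [← hset]
    exact hih

end SCUB

namespace SCUB

lemma main_fixes {n : ℕ} {E : Fin n → Fin n → Bool} (hE : SymDigraph E)
    (ω : List (Fin n)) (hω : NKUniversal n 2 ω) :
    Fixes (conjNet E) (List.finRange n ++ ω) := by
  classical
  intro x
  rw [applyWord_append]
  set y := applyWord (conjNet E) (List.finRange n) x with hy
  have hP : PInv E x y Finset.univ := by
    have hbase : PInv E x x (∅ : Finset (Fin n)) := by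
      refine ⟨fun j _ => rfl, ?_, ?_, ?_⟩ <;> (intro i hi; simp at hi)
    have := prefix_run hE (List.finRange n) x ∅ (List.nodup_finRange n)
      (by simp) hbase
    have hset : (∅ : Finset (Fin n)) ∪ (List.finRange n).toFinset = Finset.univ := by
      ext b; simp
    rwa [hset] at this
  obtain ⟨hP1, hP2, h3, h4⟩ := hP
  have hGood : Good E y := by
    intro i hi
    rcases h3 i (Finset.mem_univ i) hi with ⟨j, _, hEji, hOr⟩ | hiso
    · refine ⟨j, hEji, ?_⟩
      rcases hOr with h | h
      · exact h
      · exact absurd (Finset.mem_univ j) h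
    · obtain ⟨j, hEji⟩ := h4 i (Finset.mem_univ i) hi
      have hji : j = i := by
        by_contra hne
        rw [hiso j hne] at hEji
        exact absurd hEji (by simp)
      exact ⟨i, hji ▸ hEji, hi⟩
  set Z : Finset (Fin n) := Finset.univ.filter (fun i => y i = false) with hZ
  set k := (Finset.univ \ Z).card with hk
  set L := build E k Z with hL
  have hchain := build_chain E k Z
  have hnodupL := build_nodup E k Z
  have hnotmem := build_notmem E k Z
  have hlenL := build_length E k Z
  have hclosed := build_closed E k Z (le_refl k)
  have hcard : (Finset.univ \ Z).card = n - Z.card := by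
    rw [Finset.card_sdiff_of_subset (Finset.subset_univ Z)]
    simp
  have hLlen : L.length ≤ n - 2 := by
    by_cases h2 : 2 ≤ Z.card
    · have hZn : Z.card ≤ n := by
        have := Finset.card_le_univ Z
        simpa using this
      have hLk : L.length ≤ n - Z.card := by
        rw [hL, ← hcard]
        exact build_length E k Z
      omega
    · have hLnil : L = [] := by
        cases hLc : L with
        | nil => rfl
        | cons v l' =>
          exfalso
          have hchain' := hchain
          rw [← hL, hLc] at hchain'
          obtain ⟨⟨j, hjZ, hEjv⟩, _⟩ := hchain'
          have hvZ : v ∉ Z := hnotmem v (by rw [← hL, hLc]; exact List.mem_cons_self)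
          have hyj : y j = false := (Finset.mem_filter.1 hjZ).2
          have hvj : v ≠ j := fun h => hvZ (h ▸ hjZ)
          rcases h3 j (Finset.mem_univ j) hyj with ⟨j', hj'j, hEj'j, hOr⟩ | hiso
          · have hyj' : y j' = false := by
              rcases hOr with h | h
              · exact h
              · exact absurd (Finset.mem_univ j') h
            have hj'Z : j' ∈ Z := Finset.mem_filter.2 ⟨Finset.mem_univ j', hyj'⟩
            have hcard1 : Z.card ≤ 1 := by omega
            exact hj'j (Finset.card_le_one.1 hcard1 _ hj'Z _ hjZ)
          · have hEvj : E v j = false := hiso v hvj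
            have hsym : E j v = E v j := hE j v (fun h => hvj h.symm)
            rw [hsym, hEvj] at hEjv
            exact absurd hEjv (by simp)
      rw [hLnil]
      simp
  set pad := ((Finset.univ \ L.toFinset).sort (· ≤ ·) : List (Fin n)) with hpad
  have hpad_nodup : pad.Nodup := Finset.sort_nodup _ _
  have hpad_len : pad.length = n - L.length := by
    rw [hpad, Finset.length_sort, Finset.card_sdiff_of_subset (Finset.subset_univ _),
      List.toFinset_card_of_nodup hnodupL]
    simp
    rfl
  set u := L ++ pad.take (n - 2 - L.length) with hu
  have hu_nodup : u.Nodup := by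
    refine List.Nodup.append hnodupL
      (List.Nodup.sublist (List.take_sublist _ _) hpad_nodup) ?_
    intro a haL hatake
    have hamem : a ∈ pad := List.mem_of_mem_take hatake
    rw [hpad, Finset.mem_sort] at hamem
    exact (Finset.mem_sdiff.1 hamem).2 (List.mem_toFinset.2 haL)
  have hu_len : u.length = n - 2 := by
    rw [hu, List.length_append, List.length_take, hpad_len]
    omega
  have hsubu : L.Sublist ω := (List.sublist_append_left L _).trans (hω u hu_nodup hu_len)
  set z := applyWord (conjNet E) ω y with hz
  have hz1 : ∀ i, (i ∈ Z ∨ i ∈ L) → z i = false :=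
    fun i hi => run_lemma hE hsubu Z y hchain hGood
      (fun j hj => (Finset.mem_filter.1 hj).2) i hi
  have hinv := inv_run hE (fun i => i ∈ Z ∨ i ∈ L) hclosed ω y hGood
      (fun i hi => Or.inl (Finset.mem_filter.2 ⟨Finset.mem_univ i, hi⟩))
  funext i
  cases hzi : z i with
  | false =>
    obtain ⟨j, hEji, hjf⟩ := hinv.1 i hzi
    exact conj_false.2 ⟨j, hEji, hjf⟩
  | true =>
    refine conj_true.2 ?_
    intro j hEji
    cases hzj : z j with
    | true => rfl
    | false =>
      exfalso
      have hTj := hinv.2 j hzj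
      have hTi : ¬ (i ∈ Z ∨ i ∈ L) := fun h => by
        rw [hz1 i h] at hzi
        exact absurd hzi (by simp)
      have hfalse := hclosed j hTj i hTi
      rw [hfalse] at hEji
      exact absurd hEji (by simp)

end SCUB

namespace SCUB

lemma sub_join_replicate {n : ℕ} :
    ∀ u : List (Fin n), u.Sublist (List.flatten (List.replicate u.length (List.finRange n))) := by
  intro u
  induction u with
  | nil => simp
  | cons a u ih =>
    obtain ⟨s, t, hst⟩ := List.append_of_mem (List.mem_finRange a)
    have h1 : u.Sublist (t ++ List.flatten (List.replicate u.length (List.finRange n))) :=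
      ih.trans (List.sublist_append_right t _)
    have h2 : (a :: u).Sublist
        ((a :: t) ++ List.flatten (List.replicate u.length (List.finRange n))) :=
      List.Sublist.cons₂ a h1
    have h3 : ((a :: t) ++ List.flatten (List.replicate u.length (List.finRange n))).Sublist
        ((s ++ a :: t) ++ List.flatten (List.replicate u.length (List.finRange n))) :=
      (List.sublist_append_right s (a :: t)).append_right _
    have h4 := h2.trans h3
    simp only [List.length_cons, List.replicate_succ, List.flatten_cons]
    set J := (List.replicate u.length (List.finRange n)).flatten with hJ
    rw [hst]
    exact h4

lemma exists_universal (n : ℕ) : ∃ W : List (Fin n), NKUniversal n 2 W := by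
  refine ⟨List.flatten (List.replicate (n - 2) (List.finRange n)), ?_⟩
  intro u _ hlen
  rw [← hlen]
  exact sub_join_replicate u

end SCUB

/-- for every symmetric digraph `E` on `[n]` and every `(n,2)`-universal
word `ω`, the word `1, 2, …, n, ω` fixes the conjunctive network on `E`; consequently
`λ_CS(n) ≤ λ_2(n) + n`. -/
theorem symmetric_conjunctive_upper_bound (n : ℕ) :
    (∀ E : Fin n → Fin n → Bool, SymDigraph E →
        ∀ ω : List (Fin n), NKUniversal n 2 ω →
          Fixes (conjNet E) (List.finRange n ++ ω)) ∧
      lamCS n ≤ lamK n 2 + n := by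
  constructor
  · intro E hE ω hω
    exact SCUB.main_fixes hE ω hω
  · obtain ⟨W₀, hW₀⟩ := SCUB.exists_universal n
    have hmem : lamK n 2 ∈ {l : ℕ | ∃ W : List (Fin n), W.length = l ∧ NKUniversal n 2 W} :=
      Nat.sInf_mem ⟨W₀.length, W₀, rfl, hW₀⟩
    obtain ⟨W, hWlen, hWuniv⟩ := hmem
    have hle : lamCS n ≤ (List.finRange n ++ W).length :=
      Nat.sInf_le ⟨List.finRange n ++ W, rfl, fun E hE => SCUB.main_fixes hE W hWuniv⟩
    simpa [List.length_append, hWlen, Nat.add_comm] using hle
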